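/- Suppose (Ω, u, p) solves the coupled complex boundary Stokes system: −αΔu + ∇p = f and ∇·u = 0 in Ω, u = g on Γ, and −p n + α ∂u/∂n + i(u·n)n = 0 on Σ, where u = u_r + i u_i and p = p_r + i p_i with f, g real. If u_i = 0 and p_i = 0 in Ω, then (Ω, u_r, p_r) solves the overdetermined free boundary problem: −αΔu_r + ∇p_r = f, ∇·u_r = 0 in Ω, u_r = g on Γ, −p_r n + α ∂u_r/∂n = 0 on Σ, and u_r·n = 0 on Σ. Conversely, any solution of the overdetermined problem gives a solution of the complex system with vanishing imaginary part. -/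

import Mathlib

open scoped BigOperators
open Filter MeasureTheory

noncomputable def pd {d : ℕ} (f : (Fin d → ℝ) → ℝ) (j : Fin d) (x : Fin d → ℝ) : ℝ :=
  fderiv ℝ f x (Pi.single j 1)

noncomputable def jac {d : ℕ} (θ : (Fin d → ℝ) → (Fin d → ℝ)) (x : Fin d → ℝ) :
    Matrix (Fin d) (Fin d) ℝ :=
  Matrix.of fun i j => pd (fun y => θ y i) j x

noncomputable def divg {d : ℕ} (θ : (Fin d → ℝ) → (Fin d → ℝ)) (x : Fin d → ℝ) : ℝ :=
  ∑ i, pd (fun y => θ y i) i x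

def dot {d : ℕ} (a b : Fin d → ℝ) : ℝ := ∑ i, a i * b i

def outer {d : ℕ} (a b : Fin d → ℝ) : Matrix (Fin d) (Fin d) ℝ :=
  Matrix.of fun i j => a i * b j

/-- Partial derivative of a complex-valued scalar field. -/
noncomputable def pdC {d : ℕ} (f : (Fin d → ℝ) → ℂ) (j : Fin d) (x : Fin d → ℝ) : ℂ :=
  fderiv ℝ f x (Pi.single j 1)

/-- Laplacian of a complex scalar field. -/
noncomputable def lapC {d : ℕ} (f : (Fin d → ℝ) → ℂ) (x : Fin d → ℝ) : ℂ :=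
  ∑ j, pdC (fun y => pdC f j y) j x

/-- Laplacian of a real scalar field. -/
noncomputable def lapR {d : ℕ} (f : (Fin d → ℝ) → ℝ) (x : Fin d → ℝ) : ℝ :=
  ∑ j, pd (fun y => pd f j y) j x

/-- Complex divergence. -/
noncomputable def divC {d : ℕ} (u : (Fin d → ℝ) → (Fin d → ℂ)) (x : Fin d → ℝ) : ℂ :=
  ∑ i, pdC (fun y => u y i) i x

/-- The coupled complex boundary Stokes system \eqref{eq:ccbm}. -/
def ComplexSystem {d : ℕ} (Ω Γ Sg : Set (Fin d → ℝ)) (α : ℝ)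
    (u : (Fin d → ℝ) → (Fin d → ℂ)) (p : (Fin d → ℝ) → ℂ)
    (f g : (Fin d → ℝ) → (Fin d → ℝ)) (nf : (Fin d → ℝ) → (Fin d → ℝ)) : Prop :=
  (∀ x ∈ Ω, (∀ i, -(α : ℂ) * lapC (fun y => u y i) x + pdC p i x = (f x i : ℂ))
      ∧ divC u x = 0)
  ∧ (∀ x ∈ Γ, ∀ i, u x i = (g x i : ℂ))
  ∧ (∀ x ∈ Sg, ∀ i,
      -(p x) * (nf x i : ℂ)
        + (α : ℂ) * (∑ j, pdC (fun y => u y i) j x * (nf x j : ℂ))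
        + Complex.I * (∑ k, u x k * (nf x k : ℂ)) * (nf x i : ℂ) = 0)

/-- The overdetermined (real) free boundary Stokes problem \eqref{eq:FSP}. -/
def OverdeterminedSystem {d : ℕ} (Ω Γ Sg : Set (Fin d → ℝ)) (α : ℝ)
    (v : (Fin d → ℝ) → (Fin d → ℝ)) (q : (Fin d → ℝ) → ℝ)
    (f g : (Fin d → ℝ) → (Fin d → ℝ)) (nf : (Fin d → ℝ) → (Fin d → ℝ)) : Prop :=
  (∀ x ∈ Ω, (∀ i, -α * lapR (fun y => v y i) x + pd q i x = f x i) ∧ divg v x = 0)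
  ∧ (∀ x ∈ Γ, ∀ i, v x i = g x i)
  ∧ (∀ x ∈ Sg,
      (∀ i, -(q x) * nf x i + α * (∑ j, pd (fun y => v y i) j x * nf x j) = 0)
      ∧ dot (v x) (nf x) = 0)


section AuxStmt16

lemma pdC_re' {d : ℕ} {f : (Fin d → ℝ) → ℂ} {x : Fin d → ℝ}
    (hf : DifferentiableAt ℝ f x) (j : Fin d) :
    (pdC f j x).re = pd (fun y => (f y).re) j x := by
  unfold pdC pd
  have h : (fun y => (f y).re) = Complex.reCLM ∘ f := rfl
  rw [h, fderiv_comp x (Complex.reCLM.differentiableAt) hf, ContinuousLinearMap.fderiv]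
  rfl

lemma pdC_im' {d : ℕ} {f : (Fin d → ℝ) → ℂ} {x : Fin d → ℝ}
    (hf : DifferentiableAt ℝ f x) (j : Fin d) :
    (pdC f j x).im = pd (fun y => (f y).im) j x := by
  unfold pdC pd
  have h : (fun y => (f y).im) = Complex.imCLM ∘ f := rfl
  rw [h, fderiv_comp x (Complex.imCLM.differentiableAt) hf, ContinuousLinearMap.fderiv]
  rfl

lemma contDiff_pdC' {d : ℕ} {f : (Fin d → ℝ) → ℂ} (hf : ContDiff ℝ 2 f) (j : Fin d) :
    ContDiff ℝ 1 (pdC f j) := by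
  have h1 : ContDiff ℝ 1 (fderiv ℝ f) := hf.fderiv_right (by norm_num)
  exact (ContinuousLinearMap.apply ℝ ℂ (Pi.single j 1)).contDiff.comp h1

end AuxStmt16

/-- if `(Ω,u,p)` solves the coupled complex boundary Stokes system with real
data `f, g` and `u_i = 0`, `p_i = 0` in `Ω`, then the real parts solve the overdetermined
free boundary problem; conversely, a real solution of the overdetermined problem (i.e. a
complex solution with vanishing imaginary part) solves the complex system. -/
theorem stmt16 {d : ℕ} (Ω Γ Sg : Set (Fin d → ℝ)) (hΩ : IsOpen Ω)
    (hΓ : Γ ⊆ closure Ω) (hSg : Sg ⊆ closure Ω) (α : ℝ) (hα : 0 < α)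
    (u : (Fin d → ℝ) → (Fin d → ℂ)) (p : (Fin d → ℝ) → ℂ)
    (f g nf : (Fin d → ℝ) → (Fin d → ℝ))
    (hu : ContDiff ℝ 2 u) (hp : ContDiff ℝ 1 p)
    (hf : Continuous f) (hg : Continuous g) :
    (ComplexSystem Ω Γ Sg α u p f g nf →
      (∀ x ∈ Ω, (∀ i, (u x i).im = 0) ∧ (p x).im = 0) →
      OverdeterminedSystem Ω Γ Sg α (fun x i => (u x i).re) (fun x => (p x).re) f g nf)
    ∧ ((∀ x, (∀ i, (u x i).im = 0) ∧ (p x).im = 0) →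
      OverdeterminedSystem Ω Γ Sg α (fun x i => (u x i).re) (fun x => (p x).re) f g nf →
      ComplexSystem Ω Γ Sg α u p f g nf)  := by
  have huc : ∀ i, ContDiff ℝ 2 (fun y => u y i) := fun i => (contDiff_pi.1 hu i)
  have hud : ∀ i x, DifferentiableAt ℝ (fun y => u y i) x := fun i x =>
    ((huc i).differentiable (by norm_num)).differentiableAt
  have hpdiff : ∀ x, DifferentiableAt ℝ p x := fun x =>
    (hp.differentiable one_ne_zero).differentiableAt
  have hpdCd : ∀ i j x, DifferentiableAt ℝ (pdC (fun y => u y i) j) x := fun i j x =>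
    ((contDiff_pdC' (huc i) j).differentiable one_ne_zero).differentiableAt
  -- real parts of Laplacian and divergence
  have hlapre : ∀ i x, (lapC (fun y => u y i) x).re = lapR (fun y => (u y i).re) x := by
    intro i x
    unfold lapC lapR
    rw [Complex.re_sum]
    refine Finset.sum_congr rfl fun j _ => ?_
    rw [pdC_re' (hpdCd i j x) j]
    congr 1
    funext y
    exact pdC_re' (hud i y) j
  have hdivre : ∀ x, (divC u x).re = divg (fun y i => (u y i).re) x := by
    intro x
    unfold divC divg
    rw [Complex.re_sum]
    exact Finset.sum_congr rfl fun i _ => pdC_re' (hud i x) i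
  constructor
  · -- forward direction
    rintro ⟨hC1, hC2, hC3⟩ him
    -- imaginary parts vanish on the closure
    have himu : ∀ i, ∀ x ∈ closure Ω, (u x i).im = 0 := by
      intro i
      have hc : Continuous fun y => (u y i).im :=
        Complex.continuous_im.comp ((huc i).continuous)
      have hsub : closure Ω ⊆ {y | (u y i).im = 0} :=
        closure_minimal (fun y hy => (him y hy).1 i) (isClosed_eq hc continuous_const)
      exact fun x hx => hsub hx
    have himp : ∀ x ∈ closure Ω, (p x).im = 0 := by
      have hc : Continuous fun y => (p y).im := Complex.continuous_im.comp hp.continuous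
      have hsub : closure Ω ⊆ {y | (p y).im = 0} :=
        closure_minimal (fun y hy => (him y hy).2) (isClosed_eq hc continuous_const)
      exact fun x hx => hsub hx
    -- the derivative of the imaginary part vanishes on the closure
    have hfim : ∀ i, ∀ x ∈ closure Ω, fderiv ℝ (fun y => (u y i).im) x = 0 := by
      intro i
      have hcd : ContDiff ℝ 2 fun y => (u y i).im := Complex.imCLM.contDiff.comp (huc i)
      have hcont : Continuous (fderiv ℝ fun y => (u y i).im) :=
        (hcd.fderiv_right (m := 1) (by norm_num)).continuous
      have hzero : ∀ x ∈ Ω, fderiv ℝ (fun y => (u y i).im) x = 0 := by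
        intro x hx
        have hev : (fun y => (u y i).im) =ᶠ[nhds x] fun _ => (0 : ℝ) :=
          Filter.eventuallyEq_of_mem (hΩ.mem_nhds hx) (fun y hy => (him y hy).1 i)
        rw [hev.fderiv_eq]
        exact fderiv_const_apply 0
      exact fun x hx =>
        closure_minimal hzero (isClosed_eq hcont continuous_const) hx
    have hpdim : ∀ i j, ∀ x ∈ closure Ω, (pdC (fun y => u y i) j x).im = 0 := by
      intro i j x hx
      rw [pdC_im' (hud i x) j]
      unfold pd
      rw [hfim i x hx]
      rfl
    refine ⟨?_, ?_, ?_⟩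
    · intro x hx
      have hxc : x ∈ closure Ω := subset_closure hx
      refine ⟨fun i => ?_, ?_⟩
      · have h := congrArg Complex.re ((hC1 x hx).1 i)
        simp only [Complex.add_re, Complex.mul_re, Complex.neg_re, Complex.neg_im,
          Complex.ofReal_re, Complex.ofReal_im] at h
        rw [hlapre i x, pdC_re' (hpdiff x) i] at h
        simpa using h
      · have h := congrArg Complex.re (hC1 x hx).2
        rw [hdivre x] at h
        simpa using h
    · intro x hx i
      have h := congrArg Complex.re (hC2 x hx i)
      simpa using h
    · intro x hx
      have hxc : x ∈ closure Ω := hSg hx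
      have hS_im : (∑ k, u x k * (nf x k : ℂ)).im = 0 := by
        rw [Complex.im_sum]
        exact Finset.sum_eq_zero fun k _ => by
          simp [Complex.mul_im, himu k x hxc]
      have hS_re : (∑ k, u x k * (nf x k : ℂ)).re
          = dot (fun i => (u x i).re) (nf x) := by
        rw [Complex.re_sum]
        unfold dot
        exact Finset.sum_congr rfl fun k _ => by simp [Complex.mul_re]
      have hA_re : ∀ i, (∑ j, pdC (fun y => u y i) j x * (nf x j : ℂ)).re
          = ∑ j, pd (fun y => (u y i).re) j x * nf x j := by
        intro i
        rw [Complex.re_sum]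
        exact Finset.sum_congr rfl fun j _ => by
          simp [Complex.mul_re, pdC_re' (hud i x) j]
      have hA_im : ∀ i, (∑ j, pdC (fun y => u y i) j x * (nf x j : ℂ)).im = 0 := by
        intro i
        rw [Complex.im_sum]
        exact Finset.sum_eq_zero fun j _ => by
          simp [Complex.mul_im, hpdim i j x hxc]
      have hkey : ∀ i,
          (-(p x).re * nf x i + α * (∑ j, pd (fun y => (u y i).re) j x * nf x j) = 0)
          ∧ dot (fun k => (u x k).re) (nf x) * nf x i = 0 := by
        intro i
        have h0 := hC3 x hx i
        have hre := congrArg Complex.re h0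
        have him' := congrArg Complex.im h0
        simp only [Complex.add_re, Complex.add_im, Complex.neg_re, Complex.neg_im,
          Complex.mul_re, Complex.mul_im, Complex.ofReal_re, Complex.ofReal_im,
          Complex.I_re, Complex.I_im, Complex.zero_re, Complex.zero_im] at hre him'
        rw [hS_im, hS_re, hA_re i, hA_im i] at hre him'
        rw [himp x hxc] at him'
        constructor
        · rw [show (-(p x).re * nf x i + α * (∑ j, pd (fun y => (u y i).re) j x * nf x j))
            = (-(p x).re * nf x i - (p x).im * 0 + (α * (∑ j, pd (fun y => (u y i).re) j x * nf x j) - 0 * 0)) by ring]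
          rw [show ((0:ℝ) = 0) from rfl]
          linarith [hre]
        · linarith [him']
      refine ⟨fun i => (hkey i).1, ?_⟩
      have hdd : dot (fun k => (u x k).re) (nf x) * dot (fun k => (u x k).re) (nf x) = 0 := by
        unfold dot
        rw [Finset.mul_sum]
        refine Finset.sum_eq_zero fun i _ => ?_
        have hthis := (hkey i).2
        unfold dot at hthis
        linear_combination (u x i).re * hthis
      exact mul_self_eq_zero.mp hdd
  · -- converse direction
    rintro him ⟨hO1, hO2, hO3⟩
    have hre_u : ∀ x i, u x i = ((u x i).re : ℂ) := by
      intro x i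
      rw [Complex.ext_iff]
      exact ⟨rfl, by simp [(him x).1 i]⟩
    have hre_p : ∀ x, p x = ((p x).re : ℂ) := by
      intro x
      rw [Complex.ext_iff]
      exact ⟨rfl, by simp [(him x).2]⟩
    have hpdim0 : ∀ i j y, (pdC (fun z => u z i) j y).im = 0 := by
      intro i j y
      rw [pdC_im' (hud i y) j]
      have hz : (fun z => (u z i).im) = fun _ => (0 : ℝ) := funext fun z => (him z).1 i
      rw [hz]
      unfold pd
      simp
    have hpdC_eq : ∀ i j y, pdC (fun z => u z i) j y
        = ((pd (fun z => (u z i).re) j y : ℝ) : ℂ) := by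
      intro i j y
      rw [Complex.ext_iff]
      exact ⟨by simpa using pdC_re' (hud i y) j, by simp [hpdim0 i j y]⟩
    have hp_eq : ∀ i x, pdC p i x = ((pd (fun y => (p y).re) i x : ℝ) : ℂ) := by
      intro i x
      rw [Complex.ext_iff]
      refine ⟨by simpa using pdC_re' (hpdiff x) i, ?_⟩
      rw [pdC_im' (hpdiff x) i]
      have hz : (fun y => (p y).im) = fun _ => (0 : ℝ) := funext fun y => (him y).2
      rw [hz]
      unfold pd
      simp
    have hlap_eq : ∀ i x, lapC (fun y => u y i) x
        = ((lapR (fun y => (u y i).re) x : ℝ) : ℂ) := by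
      intro i x
      rw [Complex.ext_iff]
      refine ⟨by simpa using hlapre i x, ?_⟩
      unfold lapC
      rw [Complex.im_sum]
      simp only [Complex.ofReal_im]
      refine Finset.sum_eq_zero fun j _ => ?_
      rw [pdC_im' (hpdCd i j x) j]
      have hz : (fun y => (pdC (fun z => u z i) j y).im) = fun _ => (0 : ℝ) :=
        funext fun y => hpdim0 i j y
      rw [hz]
      unfold pd
      simp
    have hdiv_eq : ∀ x, divC u x = ((divg (fun y i => (u y i).re) x : ℝ) : ℂ) := by
      intro x
      unfold divC divg
      rw [Complex.ofReal_sum]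
      exact Finset.sum_congr rfl fun i _ => hpdC_eq i i x
    refine ⟨?_, ?_, ?_⟩
    · intro x hx
      refine ⟨fun i => ?_, ?_⟩
      · rw [hlap_eq i x, hp_eq i x]
        exact_mod_cast (hO1 x hx).1 i
      · rw [hdiv_eq x]
        exact_mod_cast (hO1 x hx).2
    · intro x hx i
      rw [hre_u x i]
      exact_mod_cast hO2 x hx i
    · intro x hx i
      have h1 := (hO3 x hx).1 i
      have h2 := (hO3 x hx).2
      have hA : (∑ j, pdC (fun y => u y i) j x * (nf x j : ℂ))
          = ((∑ j, pd (fun y => (u y i).re) j x * nf x j : ℝ) : ℂ) := by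
        rw [Complex.ofReal_sum]
        exact Finset.sum_congr rfl fun j _ => by
          rw [hpdC_eq i j x]; push_cast; ring
      have hS : (∑ k, u x k * (nf x k : ℂ))
          = ((dot (fun k => (u x k).re) (nf x) : ℝ) : ℂ) := by
        unfold dot
        rw [Complex.ofReal_sum]
        exact Finset.sum_congr rfl fun k _ => by
          rw [hre_u x k]; push_cast; ring
      rw [hA, hS, h2, hre_p x]
      have h1' : -(p x).re * nf x i
          + α * ∑ j, pd (fun y => (u y i).re) j x * nf x j = 0 := h1
      have h1c : -(((p x).re : ℝ) : ℂ) * (nf x i : ℂ)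
          + (α : ℂ) * ((∑ j, pd (fun y => (u y i).re) j x * nf x j : ℝ) : ℂ) = 0 := by
        exact_mod_cast h1'
      push_cast at h1c ⊢
      linear_combination h1c
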